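/- For every γ > 0, G > 0, R > 0, and natural N ≥ 1, there exist a dimension d ≥ 1, a convex function f : ℝ^d → ℝ with G-bounded subgradients, a minimizer x* of f over ℝ^d, a starting point x¹ with ‖x¹ − x*‖ ≤ R, and a sequence g¹, …, g^N with each g^k a subgradient of f at x^k, such that the AdaGrad iterates x^{k+1} = x^k − h_k·g^k with h_k = h/√(G² + ∑_{i=1}^{k} ‖g^i‖²) and h = R/N^γ satisfy f(x^{N+1}) − f(x*) ≥ (1/9)·max{ G·R·N^{−γ}, min{ G·R·N^{γ − 1/2}, G·R } }. -/

import Mathlib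

open Finset

section AdagradAux

variable {d : ℕ}

lemma coord_le_norm' (z : EuclideanSpace ℝ (Fin d)) (j : Fin d) : |z j| ≤ ‖z‖ := by
  rw [EuclideanSpace.norm_eq]
  have h1 : |z j| = Real.sqrt (‖z j‖ ^ 2) := by
    rw [Real.sqrt_sq (norm_nonneg _)]; exact (Real.norm_eq_abs _).symm
  rw [h1]
  apply Real.sqrt_le_sqrt
  exact Finset.single_le_sum (f := fun i => ‖z i‖ ^ 2) (fun i _ => by positivity) (mem_univ j)

lemma subgrad_norm_le {G : ℝ} (hG : 0 ≤ G) (f : EuclideanSpace ℝ (Fin d) → ℝ)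
    (lip : ∀ x y, f x ≤ f y + G * ‖x - y‖)
    (z s : EuclideanSpace ℝ (Fin d))
    (hs : ∀ y, f z + (inner ℝ s (y - z) : ℝ) ≤ f y) : ‖s‖ ≤ G := by
  have h1 := hs (z + s)
  rw [show (z + s) - z = s by abel, real_inner_self_eq_norm_sq] at h1
  have h3 : f (z + s) ≤ f z + G * ‖s‖ := by
    have := lip (z + s) z
    rwa [show (z + s) - z = s by abel] at this
  have h4 : ‖s‖ ^ 2 ≤ G * ‖s‖ := by nlinarith
  rcases eq_or_lt_of_le (norm_nonneg s) with h | h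
  · rw [← h]; exact hG
  · nlinarith

lemma single_smul' (i : Fin d) (c a : ℝ) :
    c • EuclideanSpace.single i a = EuclideanSpace.single i (c * a) := by
  ext j
  simp [EuclideanSpace.single_apply, PiLp.smul_apply, mul_ite]

lemma single_neg' (i : Fin d) (a : ℝ) :
    EuclideanSpace.single i (-a) = -EuclideanSpace.single i a := by
  ext j
  by_cases h : j = i <;> simp [EuclideanSpace.single_apply, PiLp.neg_apply, h]

end AdagradAux

/-! ### Regime A function -/

noncomputable def fA (G : ℝ) (y : EuclideanSpace ℝ (Fin 1)) : ℝ := G * max (y 0) (-(y 0))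

lemma fA_abs (G : ℝ) (y : EuclideanSpace ℝ (Fin 1)) : fA G y = G * |y 0| := by
  rw [fA, abs_eq_max_neg]

lemma convexOn_fA {G : ℝ} (hG : 0 ≤ G) : ConvexOn ℝ Set.univ (fA G) := by
  refine ⟨convex_univ, ?_⟩
  intro x _ y _ a b ha hb hab
  simp only [fA, smul_eq_mul]
  have hxy : (a • x + b • y) 0 = a * x 0 + b * y 0 := by
    rw [PiLp.add_apply, PiLp.smul_apply, PiLp.smul_apply, smul_eq_mul, smul_eq_mul]
  rw [hxy]
  have hx1 : x 0 ≤ max (x 0) (-(x 0)) := le_max_left _ _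
  have hx2 : -(x 0) ≤ max (x 0) (-(x 0)) := le_max_right _ _
  have hy1 : y 0 ≤ max (y 0) (-(y 0)) := le_max_left _ _
  have hy2 : -(y 0) ≤ max (y 0) (-(y 0)) := le_max_right _ _
  have hmax : max (a * x 0 + b * y 0) (-(a * x 0 + b * y 0))
      ≤ a * max (x 0) (-(x 0)) + b * max (y 0) (-(y 0)) := by
    apply max_le <;> nlinarith
  nlinarith [mul_le_mul_of_nonneg_left hmax hG]

lemma fA_lip {G : ℝ} (hG : 0 ≤ G) (x y : EuclideanSpace ℝ (Fin 1)) :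
    fA G x ≤ fA G y + G * ‖x - y‖ := by
  rw [fA_abs, fA_abs]
  have h1 : |x 0| - |y 0| ≤ |x 0 - y 0| := abs_sub_abs_le_abs_sub _ _
  have h2 : |x 0 - y 0| ≤ ‖x - y‖ := by
    have := coord_le_norm' (x - y) 0
    rwa [PiLp.sub_apply] at this
  nlinarith

/-! ### Regime B construction -/

noncomputable def bJ (d : ℕ) (hd : 0 < d) (y : EuclideanSpace ℝ (Fin d)) : Fin d :=
  (Finset.exists_max_image Finset.univ (fun j => -(y j))
    ⟨⟨0, hd⟩, Finset.mem_univ _⟩).choose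

lemma bJ_spec (d : ℕ) (hd : 0 < d) (y : EuclideanSpace ℝ (Fin d)) (j : Fin d) :
    -(y j) ≤ -(y (bJ d hd y)) := by
  have h := (Finset.exists_max_image Finset.univ (fun j => -(y j))
    ⟨⟨0, hd⟩, Finset.mem_univ _⟩).choose_spec
  exact h.2 j (Finset.mem_univ j)

noncomputable def btraj (d : ℕ) (hd : 0 < d) (r h : ℝ) : ℕ → EuclideanSpace ℝ (Fin d)
  | 0 => WithLp.toLp 2 (fun _ => -r)
  | m + 1 => btraj d hd r h m +
      EuclideanSpace.single (bJ d hd (btraj d hd r h m)) (h / Real.sqrt ((m : ℝ) + 2))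

lemma btraj_sum (d : ℕ) (hd : 0 < d) (r h : ℝ) (m : ℕ) :
    ∑ j, btraj d hd r h m j = -(d : ℝ) * r + ∑ i ∈ Icc 1 m, h / Real.sqrt ((i : ℝ) + 1) := by
  induction m with
  | zero => simp [btraj]
  | succ m ih =>
      have hstep : ∀ j, btraj d hd r h (m+1) j
          = btraj d hd r h m j
            + EuclideanSpace.single (bJ d hd (btraj d hd r h m)) (h / Real.sqrt ((m : ℝ) + 2)) j := by
        intro j
        show (btraj d hd r h m + _) j = _
        rw [PiLp.add_apply]
      calc ∑ j, btraj d hd r h (m+1) j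
          = ∑ j, (btraj d hd r h m j
              + EuclideanSpace.single (bJ d hd (btraj d hd r h m)) (h / Real.sqrt ((m : ℝ) + 2)) j) := by
            exact Finset.sum_congr rfl fun j _ => hstep j
        _ = (∑ j, btraj d hd r h m j) + (h / Real.sqrt ((m : ℝ) + 2)) := by
            rw [Finset.sum_add_distrib]
            congr 1
            simp only [EuclideanSpace.single_apply]
            rw [Finset.sum_ite_eq' Finset.univ _ (fun _ => h / Real.sqrt ((m : ℝ) + 2))]
            simp
        _ = -(d : ℝ) * r + ∑ i ∈ Icc 1 (m+1), h / Real.sqrt ((i : ℝ) + 1) := by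
            rw [ih, Finset.sum_Icc_succ_top (by omega)]
            have : ((m:ℝ)+1)+1 = (m:ℝ)+2 := by ring
            push_cast
            rw [this]
            ring


lemma btraj_maxcoord (d : ℕ) (hd : 0 < d) (r h : ℝ) (m : ℕ) (S' : ℝ)
    (hP : ∑ i ∈ Icc 1 m, h / Real.sqrt ((i:ℝ)+1) ≤ S') :
    r - S'/(d:ℝ) ≤ -(btraj d hd r h m (bJ d hd (btraj d hd r h m))) := by
  have hdR : (0:ℝ) < d := by exact_mod_cast hd
  set y := btraj d hd r h m with hy
  set J := bJ d hd y with hJ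
  have h1 : ∑ j, -(y j) ≤ (d:ℝ) * (-(y J)) := by
    calc ∑ j, -(y j) ≤ ∑ _j : Fin d, -(y J) :=
          Finset.sum_le_sum (fun j _ => bJ_spec d hd y j)
      _ = (d:ℝ) * (-(y J)) := by
          rw [Finset.sum_const, Finset.card_univ, Fintype.card_fin, nsmul_eq_mul]
  have h2 : ∑ j, -(y j) = -(∑ j, y j) := by
    rw [← Finset.sum_neg_distrib]
  have h3 := btraj_sum d hd r h m
  have h5 : ∑ j, -(y j) = (d:ℝ)*r - ∑ i ∈ Icc 1 m, h / Real.sqrt ((i:ℝ)+1) := by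
    rw [h2, h3]; ring
  have h4 : (d:ℝ)*r - S' ≤ (d:ℝ)*(-(y J)) := by linarith
  have e : (d:ℝ)*(r - S'/(d:ℝ)) = (d:ℝ)*r - S' := by
    rw [mul_sub, mul_comm ((d:ℝ)) (S'/(d:ℝ)), div_mul_cancel₀ _ (ne_of_gt hdR)]
  exact le_of_mul_le_mul_left (by rw [e]; exact h4) hdR

noncomputable def fB (d : ℕ) (hd : 0 < d) (G : ℝ) (y : EuclideanSpace ℝ (Fin d)) : ℝ :=
  G * Finset.univ.sup' ⟨⟨0, hd⟩, Finset.mem_univ _⟩ (fun j => max (-(y j)) 0)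

lemma fB_nonneg (hd : 0 < d) {G : ℝ} (hG : 0 ≤ G) (y : EuclideanSpace ℝ (Fin d)) :
    0 ≤ fB d hd G y := by
  apply mul_nonneg hG
  exact le_trans (le_max_right _ 0)
    (Finset.le_sup' (fun j => max (-(y j)) 0) (mem_univ (⟨0, hd⟩ : Fin d)))

lemma fB_zero (hd : 0 < d) (G : ℝ) : fB d hd G 0 = 0 := by
  unfold fB
  have : ∀ j : Fin d, max (-((0 : EuclideanSpace ℝ (Fin d)) j)) 0 = 0 := by
    intro j
    have : (0 : EuclideanSpace ℝ (Fin d)) j = 0 := rfl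
    simp [this]
  rw [show (fun j : Fin d => max (-((0 : EuclideanSpace ℝ (Fin d)) j)) 0) = fun _ => (0:ℝ) from funext this]
  exact mul_eq_zero_of_right _ (Finset.sup'_const _ _)

lemma convexOn_fB (hd : 0 < d) {G : ℝ} (hG : 0 ≤ G) :
    ConvexOn ℝ Set.univ (fB d hd G) := by
  have base : ConvexOn ℝ Set.univ
      (fun y : EuclideanSpace ℝ (Fin d) =>
        Finset.univ.sup' ⟨⟨0, hd⟩, Finset.mem_univ _⟩ (fun j => max (-(y j)) 0)) := by
    refine ⟨convex_univ, ?_⟩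
    intro x _ y _ a b ha hb hab
    apply Finset.sup'_le
    intro j _
    have hxy : (a • x + b • y) j = a * x j + b * y j := by
      rw [PiLp.add_apply, PiLp.smul_apply, PiLp.smul_apply, smul_eq_mul, smul_eq_mul]
    have h1 : max (-((a • x + b • y) j)) 0 ≤ a * max (-(x j)) 0 + b * max (-(y j)) 0 := by
      rw [hxy]
      apply max_le
      · have hx1 : -(x j) ≤ max (-(x j)) 0 := le_max_left _ _
        have hy1 : -(y j) ≤ max (-(y j)) 0 := le_max_left _ _
        nlinarith
      · have hx1 : (0:ℝ) ≤ max (-(x j)) 0 := le_max_right _ _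
        have hy1 : (0:ℝ) ≤ max (-(y j)) 0 := le_max_right _ _
        nlinarith
    refine le_trans h1 ?_
    have h2 : max (-(x j)) 0 ≤ Finset.univ.sup' ⟨⟨0, hd⟩, Finset.mem_univ _⟩ (fun j => max (-(x j)) 0) :=
      Finset.le_sup' (fun j => max (-(x j)) 0) (mem_univ j)
    have h3 : max (-(y j)) 0 ≤ Finset.univ.sup' ⟨⟨0, hd⟩, Finset.mem_univ _⟩ (fun j => max (-(y j)) 0) :=
      Finset.le_sup' (fun j => max (-(y j)) 0) (mem_univ j)
    simp only [smul_eq_mul]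
    nlinarith
  unfold fB
  simpa only [smul_eq_mul] using base.smul hG

lemma fB_lip (hd : 0 < d) {G : ℝ} (hG : 0 ≤ G) (x y : EuclideanSpace ℝ (Fin d)) :
    fB d hd G x ≤ fB d hd G y + G * ‖x - y‖ := by
  unfold fB
  have key : Finset.univ.sup' ⟨⟨0, hd⟩, Finset.mem_univ _⟩ (fun j => max (-(x j)) 0)
      ≤ Finset.univ.sup' ⟨⟨0, hd⟩, Finset.mem_univ _⟩ (fun j => max (-(y j)) 0) + ‖x - y‖ := by
    apply Finset.sup'_le
    intro j _
    have h1 : max (-(x j)) 0 ≤ max (-(y j)) 0 + |x j - y j| := by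
      rcases le_total (-(x j)) 0 with h | h
      · have : (0:ℝ) ≤ max (-(y j)) 0 := le_max_right _ _
        have := abs_nonneg (x j - y j)
        simp [max_eq_right h]; positivity
      · have h2 : -(x j) ≤ -(y j) + |x j - y j| := by
          have := neg_abs_le (x j - y j)
          linarith [abs_nonneg (x j - y j)]
        apply max_le
        · exact le_trans h2 (by linarith [le_max_left (-(y j)) (0:ℝ)])
        · linarith [le_max_right (-(y j)) (0:ℝ), abs_nonneg (x j - y j)]
    have h2 : |x j - y j| ≤ ‖x - y‖ := by
      have := coord_le_norm' (x - y) j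
      rwa [PiLp.sub_apply] at this
    have h3 : max (-(y j)) 0 ≤ Finset.univ.sup' ⟨⟨0, hd⟩, Finset.mem_univ _⟩ (fun j => max (-(y j)) 0) :=
      Finset.le_sup' (fun j => max (-(y j)) 0) (mem_univ j)
    linarith
  nlinarith [norm_nonneg (x - y)]

lemma fB_eval (hd : 0 < d) {G : ℝ} (hG : 0 ≤ G) (y : EuclideanSpace ℝ (Fin d)) (J : Fin d)
    (hmax : ∀ j, -(y j) ≤ -(y J)) (hpos : 0 ≤ -(y J)) :
    fB d hd G y = G * (-(y J)) := by
  unfold fB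
  congr 1
  apply le_antisymm
  · apply Finset.sup'_le
    intro j _
    exact max_le (hmax j) hpos
  · have := Finset.le_sup' (fun j => max (-(y j)) 0) (mem_univ J)
    calc -(y J) ≤ max (-(y J)) 0 := le_max_left _ _
      _ ≤ _ := this

lemma fB_subgrad (hd : 0 < d) {G : ℝ} (hG : 0 ≤ G) (y : EuclideanSpace ℝ (Fin d)) (J : Fin d)
    (hmax : ∀ j, -(y j) ≤ -(y J)) (hpos : 0 ≤ -(y J)) (z : EuclideanSpace ℝ (Fin d)) :
    fB d hd G y + (inner ℝ (EuclideanSpace.single J (-G)) (z - y) : ℝ) ≤ fB d hd G z := by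
  rw [fB_eval hd hG y J hmax hpos]
  rw [EuclideanSpace.inner_single_left]
  have h1 : (starRingEnd ℝ) (-G) = -G := by simp
  rw [h1, PiLp.sub_apply]
  have h2 : -(z J) ≤ Finset.univ.sup' ⟨⟨0, hd⟩, Finset.mem_univ _⟩
      (fun j => max (-(z j)) 0) :=
    le_trans (le_max_left _ _) (Finset.le_sup' (fun j => max (-(z j)) 0) (mem_univ J))
  have h3 : G * (-(z J)) ≤ fB d hd G z := by
    unfold fB
    exact mul_le_mul_of_nonneg_left h2 hG
  nlinarith [h3]

/-! ### Sum estimates -/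

lemma inv_sqrt_le (x : ℝ) (hx : 0 ≤ x) :
    1 / Real.sqrt (x + 1) ≤ 2 * (Real.sqrt (x + 1) - Real.sqrt x) := by
  have ha : 0 < Real.sqrt (x + 1) := Real.sqrt_pos.mpr (by linarith)
  have ha2 : Real.sqrt (x + 1) ^ 2 = x + 1 := Real.sq_sqrt (by linarith)
  have hb2 : Real.sqrt x ^ 2 = x := Real.sq_sqrt hx
  rw [div_le_iff₀ ha]
  nlinarith [sq_nonneg (Real.sqrt (x + 1) - Real.sqrt x)]

lemma sqrt_succ_le (N : ℕ) (hN : 1 ≤ N) :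
    Real.sqrt ((N : ℝ) + 1) - 1 ≤ Real.sqrt N := by
  have h1 : ((N : ℝ) + 1) ≤ (Real.sqrt N + 1) ^ 2 := by
    nlinarith [Real.sq_sqrt (show (0:ℝ) ≤ N by positivity), Real.sqrt_nonneg (N:ℝ),
      Real.sqrt_le_sqrt (show (1:ℝ) ≤ (N:ℝ) by exact_mod_cast hN), Real.sqrt_one]
  have h2 := Real.sqrt_le_sqrt h1
  rw [Real.sqrt_sq (by positivity)] at h2
  linarith

lemma step_sum_le (h : ℝ) (hh : 0 ≤ h) (N : ℕ) (hN : 1 ≤ N) :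
    ∑ i ∈ Icc 1 N, h / Real.sqrt ((i : ℝ) + 1) ≤ 2 * h * Real.sqrt N := by
  have key : ∑ i ∈ Icc 1 N, h / Real.sqrt ((i : ℝ) + 1)
      ≤ ∑ i ∈ Icc 1 N, h * (2 * (Real.sqrt ((i:ℝ) + 1) - Real.sqrt i)) := by
    apply Finset.sum_le_sum
    intro i _
    have hi0 : (0:ℝ) ≤ (i:ℝ) := by positivity
    have := inv_sqrt_le (i : ℝ) hi0
    calc h / Real.sqrt ((i:ℝ) + 1) = h * (1 / Real.sqrt ((i:ℝ)+1)) := by ring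
      _ ≤ h * (2 * (Real.sqrt ((i:ℝ) + 1) - Real.sqrt i)) := by
          apply mul_le_mul_of_nonneg_left this hh
  have tel : ∑ i ∈ Icc 1 N, (2 * Real.sqrt ((i:ℝ) + 1) - 2 * Real.sqrt (i:ℝ))
      = 2 * Real.sqrt ((N:ℝ) + 1) - 2 := by
    have h2 : Icc 1 N = Ico 1 (N+1) := by rw [Finset.Ico_add_one_right_eq_Icc]
    rw [h2, Finset.sum_Ico_eq_sum_range]
    have h3 : ∀ i ∈ Finset.range (N + 1 - 1),
        (2 * Real.sqrt ((1 + i : ℕ) + (1:ℝ)) - 2 * Real.sqrt ((1 + i : ℕ) : ℝ))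
        = (fun j : ℕ => 2 * Real.sqrt ((j : ℝ) + 1)) (i + 1)
          - (fun j : ℕ => 2 * Real.sqrt ((j : ℝ) + 1)) i := by
      intro i _
      push_cast
      ring_nf
    rw [Finset.sum_congr rfl h3, Finset.sum_range_sub (fun j : ℕ => 2 * Real.sqrt ((j : ℝ) + 1))]
    norm_num
  calc ∑ i ∈ Icc 1 N, h / Real.sqrt ((i : ℝ) + 1)
      ≤ ∑ i ∈ Icc 1 N, h * (2 * (Real.sqrt ((i:ℝ) + 1) - Real.sqrt i)) := key
    _ = h * (2 * Real.sqrt ((N:ℝ) + 1) - 2) := by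
        rw [← Finset.mul_sum]
        congr 1
        rw [← tel]
        apply Finset.sum_congr rfl
        intro i _
        ring
    _ ≤ 2 * h * Real.sqrt N := by
        have := sqrt_succ_le N hN
        nlinarith

/-! ### Main theorem -/
set_option maxHeartbeats 2000000 in

theorem adagrad_last_iterate_lower_bound
    (G R γ : ℝ) (hG : 0 < G) (hR : 0 < R) (hγ : 0 < γ)
    (N : ℕ) (hN : 1 ≤ N) :
    ∃ (d : ℕ), 1 ≤ d ∧
    ∃ (f : EuclideanSpace ℝ (Fin d) → ℝ)
      (xstar : EuclideanSpace ℝ (Fin d))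
      (x g : ℕ → EuclideanSpace ℝ (Fin d)),
      ConvexOn ℝ Set.univ f ∧
      (∀ z s : EuclideanSpace ℝ (Fin d),
        (∀ y, f z + (inner ℝ s (y - z) : ℝ) ≤ f y) → ‖s‖ ≤ G) ∧
      (∀ y, f xstar ≤ f y) ∧
      ‖x 1 - xstar‖ ≤ R ∧
      (∀ k, 1 ≤ k → k ≤ N →
        (∀ y, f (x k) + (inner ℝ (g k) (y - x k) : ℝ) ≤ f y) ∧
        x (k + 1) = x k -
          (R / (N : ℝ) ^ γ / Real.sqrt (G ^ 2 + ∑ i ∈ Icc 1 k, ‖g i‖ ^ 2)) • g k) ∧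
      f (x (N + 1)) - f xstar ≥
        1 / 9 * max (G * R * (N : ℝ) ^ (-γ))
          (min (G * R * (N : ℝ) ^ (γ - 1 / 2)) (G * R)) := by
  have hN1 : (1:ℝ) ≤ (N:ℝ) := by exact_mod_cast hN
  have hN0 : (0:ℝ) < (N:ℝ) := by linarith
  have hNg : 0 < (N:ℝ) ^ γ := Real.rpow_pos_of_pos hN0 γ
  set hs : ℝ := R / (N:ℝ) ^ γ with hs_def
  have hh0 : 0 < hs := div_pos hR hNg
  have hGRneg : G * R * (N:ℝ) ^ (-γ) = G * hs := by
    rw [Real.rpow_neg hN0.le, hs_def]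
    field_simp
  rcases le_total (min (G * R * (N:ℝ) ^ (γ - 1/2)) (G * R)) (G * R * (N:ℝ) ^ (-γ)) with hc | hc
  · -- Regime A : lazy steps, one final kick
    refine ⟨1, le_refl 1, fA G, 0,
      (fun k => if k ≤ N then 0 else EuclideanSpace.single 0 (-(hs / Real.sqrt 2))),
      (fun k => if k = N then EuclideanSpace.single 0 G else 0),
      convexOn_fA hG.le,
      fun z s hsg => subgrad_norm_le hG.le (fA G) (fA_lip hG.le) z s hsg,
      ?_, ?_, ?_, ?_⟩
    · -- minimality at 0
      intro y
      have h0 : fA G 0 = 0 := by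
        rw [fA_abs]
        have : (0 : EuclideanSpace ℝ (Fin 1)) 0 = 0 := rfl
        rw [this]; simp
      rw [h0, fA_abs]
      positivity
    · -- initial distance
      simp only [if_pos hN, sub_zero, norm_zero]
      exact hR.le
    · -- iteration properties
      intro k hk1 hk2
      constructor
      · -- subgradient property
        intro y
        simp only [if_pos hk2]
        by_cases hkN : k = N
        · simp only [if_pos hkN]
          rw [sub_zero, EuclideanSpace.inner_single_left]
          have h1 : (starRingEnd ℝ) G = G := by simp
          rw [h1]
          have h0 : fA G 0 = 0 := by
            rw [fA_abs]
            have : (0 : EuclideanSpace ℝ (Fin 1)) 0 = 0 := rfl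
            rw [this]; simp
          rw [h0, fA]
          have := le_max_left (y 0) (-(y 0))
          nlinarith
        · simp only [if_neg hkN]
          rw [inner_zero_left]
          have h0 : fA G 0 = 0 := by
            rw [fA_abs]
            have : (0 : EuclideanSpace ℝ (Fin 1)) 0 = 0 := rfl
            rw [this]; simp
          rw [h0, fA_abs]
          have : 0 ≤ G * |y 0| := by positivity
          linarith
      · -- recursion
        by_cases hkN : k = N
        · subst hkN
          have hx1 : ¬ (k + 1 ≤ k) := by omega
          simp only [if_pos (le_refl k), if_neg hx1, eq_self_iff_true, if_true]
          have hsum : ∑ i ∈ Icc 1 k, ‖(if i = k then EuclideanSpace.single (0 : Fin 1) G else 0)‖ ^ 2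
              = G ^ 2 := by
            have : ∀ i ∈ Icc 1 k,
                ‖(if i = k then EuclideanSpace.single (0 : Fin 1) G else 0)‖ ^ 2
                = if i = k then G ^ 2 else 0 := by
              intro i _
              by_cases hik : i = k
              · simp only [if_pos hik, EuclideanSpace.norm_single]
                rw [Real.norm_eq_abs, abs_of_pos hG]
              · simp [hik]
            rw [Finset.sum_congr rfl this, Finset.sum_ite_eq' (Icc 1 k) k (fun _ => G^2)]
            simp only [Finset.mem_Icc]
            rw [if_pos ⟨hk1, le_refl k⟩]
          have hsqrt : Real.sqrt (G ^ 2 + G ^ 2) = G * Real.sqrt 2 := by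
            rw [show G ^ 2 + G ^ 2 = G ^ 2 * 2 by ring, Real.sqrt_mul (sq_nonneg G),
              Real.sqrt_sq hG.le]
          have hsc : hs / (G * Real.sqrt 2) * G = hs / Real.sqrt 2 := by
            have h2 : Real.sqrt 2 ≠ 0 := by positivity
            field_simp
          rw [hsum, hsqrt, single_smul', hsc, zero_sub, ← single_neg']
        · have hkN' : k + 1 ≤ N := by omega
          simp only [if_pos hk2, if_pos hkN', if_neg hkN, smul_zero, sub_zero]
    · -- final bound
      have hx1 : ¬ (N + 1 ≤ N) := by omega
      simp only [if_neg hx1]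
      have h0 : fA G 0 = 0 := by
        rw [fA_abs]
        have : (0 : EuclideanSpace ℝ (Fin 1)) 0 = 0 := rfl
        rw [this]; simp
      rw [h0, sub_zero, max_eq_left hc, hGRneg]
      have happ : (EuclideanSpace.single (0 : Fin 1) (-(hs / Real.sqrt 2))) 0
          = -(hs / Real.sqrt 2) := by
        rw [EuclideanSpace.single_apply, if_pos rfl]
      rw [fA, happ]
      have hpos : 0 ≤ hs / Real.sqrt 2 := by positivity
      rw [neg_neg, max_eq_right (by linarith : -(hs / Real.sqrt 2) ≤ hs / Real.sqrt 2)]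
      have hsqrt2 : 0 < Real.sqrt 2 := by positivity
      have hle : Real.sqrt 2 ≤ 2 := by
        nlinarith [Real.sq_sqrt (show (0:ℝ) ≤ 2 by norm_num)]
      have h9 : (1:ℝ)/9 ≤ 1/Real.sqrt 2 := by
        apply one_div_le_one_div_of_le hsqrt2
        linarith
      have e1 : G * (hs / Real.sqrt 2) = (G * hs) * (1 / Real.sqrt 2) := by ring
      have e2 : (G * hs) * (1/9) ≤ (G * hs) * (1 / Real.sqrt 2) :=
        mul_le_mul_of_nonneg_left h9 (by positivity)
      rw [ge_iff_le, e1]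
      linarith
  · -- Regime B : greedy max-coordinate construction
    set u : ℝ := (N:ℝ) ^ (γ - 1/2) with hu_def
    have hu : 0 < u := Real.rpow_pos_of_pos hN0 _
    set κ : ℝ := min u 1 with hκ_def
    have hκ0 : 0 < κ := lt_min hu one_pos
    have hκ1 : κ ≤ 1 := min_le_right _ _
    set d : ℕ := ⌈(16:ℝ)/κ^2⌉₊ with hd_def
    have hd : 0 < d := Nat.ceil_pos.mpr (by positivity)
    have hdR : (0:ℝ) < (d:ℝ) := by exact_mod_cast hd
    have hd1 : (16:ℝ)/κ^2 ≤ (d:ℝ) := Nat.le_ceil _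
    have hd2 : (d:ℝ) ≤ 17/κ^2 := by
      have h1 : ((⌈(16:ℝ)/κ^2⌉₊ : ℝ)) < 16/κ^2 + 1 :=
        Nat.ceil_lt_add_one (by positivity)
      have h1κ : 1 ≤ 1/κ^2 := by
        rw [le_div_iff₀ (by positivity)]
        nlinarith
      calc (d:ℝ) ≤ 16/κ^2 + 1 := by rw [hd_def]; linarith
        _ ≤ 16/κ^2 + 1/κ^2 := by linarith
        _ = 17/κ^2 := by ring
    have hsd : 0 < Real.sqrt d := Real.sqrt_pos.mpr hdR
    set r : ℝ := R / Real.sqrt d with hr_def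
    have hr0 : 0 < r := div_pos hR hsd
    set S : ℝ := ∑ i ∈ Icc 1 N, hs / Real.sqrt ((i:ℝ)+1) with hS_def
    have hS0 : 0 ≤ S := Finset.sum_nonneg (fun i _ => by positivity)
    have hsN : 0 < Real.sqrt N := Real.sqrt_pos.mpr hN0
    have hκu : κ * Real.sqrt N ≤ (N:ℝ)^γ := by
      have h1 : κ ≤ u := min_le_left _ _
      have h2 : u = (N:ℝ)^γ / Real.sqrt N := by
        rw [hu_def, Real.rpow_sub hN0, ← Real.sqrt_eq_rpow]
      rw [h2, le_div_iff₀ hsN] at h1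
      exact h1
    have hSb : S ≤ 2*R/κ := by
      have h1 : S ≤ 2 * hs * Real.sqrt N := step_sum_le hs hh0.le N hN
      have h2 : 2 * hs * Real.sqrt N ≤ 2*R/κ := by
        rw [hs_def, le_div_iff₀ hκ0]
        have f := mul_le_mul_of_nonneg_left hκu
          (by positivity : (0:ℝ) ≤ 2*R/(N:ℝ)^γ)
        have e : 2*R/(N:ℝ)^γ * ((N:ℝ)^γ) = 2*R :=
          div_mul_cancel₀ _ (ne_of_gt hNg)
        ring_nf at f e ⊢
        linarith [f, e]
      linarith
    clear_value u κ d r S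
    -- key average bound : r - S/d ≥ R κ / 9
    have hs17 : 0 < Real.sqrt 17 := by positivity
    have h17 : Real.sqrt 17 ≤ 72/17 := by
      nlinarith [Real.sq_sqrt (show (0:ℝ) ≤ 17 by norm_num), Real.sqrt_nonneg 17,
        sq_nonneg (Real.sqrt 17 - 72/17)]
    have h972 : (17:ℝ)/72 ≤ 1/Real.sqrt 17 := by
      have := one_div_le_one_div_of_le hs17 h17
      calc (17:ℝ)/72 = 1/(72/17) := by norm_num
        _ ≤ 1/Real.sqrt 17 := this
    have hsd17 : Real.sqrt (d:ℝ) ≤ Real.sqrt 17 / κ := by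
      have h1 := Real.sqrt_le_sqrt hd2
      rwa [show (17:ℝ)/κ^2 = (Real.sqrt 17/κ)^2 by
          rw [div_pow, Real.sq_sqrt (by norm_num : (0:ℝ) ≤ 17)],
        Real.sqrt_sq (div_pos hs17 hκ0).le] at h1
    have e1a : κ/Real.sqrt 17 ≤ 1/Real.sqrt d := by
      have := one_div_le_one_div_of_le hsd hsd17
      rwa [one_div_div] at this
    have e1 : R*κ*(17/72) ≤ r := by
      have f1 := mul_le_mul_of_nonneg_left e1a hR.le
      have f2 := mul_le_mul_of_nonneg_left h972 (mul_nonneg hR.le hκ0.le)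
      have f3 : r = R * (1/Real.sqrt d) := by rw [hr_def]; ring
      ring_nf at f1 f2 f3 ⊢
      linarith [f1, f2, f3]
    have e2 : S/(d:ℝ) ≤ R*κ/8 := by
      have f3 : 1/(d:ℝ) ≤ κ^2/16 := by
        rw [div_le_div_iff₀ hdR (by norm_num : (0:ℝ) < 16)]
        have g1 : κ^2*(16/κ^2) ≤ κ^2*(d:ℝ) :=
          mul_le_mul_of_nonneg_left hd1 (by positivity)
        have g2 : κ^2 * (16/κ^2) = 16 := by
          rw [mul_comm, div_mul_cancel₀ _ (pow_ne_zero 2 (ne_of_gt hκ0))]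
        linarith
      have f5 : S/(d:ℝ) = S * (1/(d:ℝ)) := by ring
      have f6 : S * (1/(d:ℝ)) ≤ (2*R/κ) * (κ^2/16) :=
        mul_le_mul hSb f3 (by positivity) (div_nonneg (by linarith) hκ0.le)
      have f7 : (2*R/κ) * (κ^2/16) = R*κ/8 := by
        have hne : κ ≠ 0 := ne_of_gt hκ0
        field_simp
        ring
      rw [f5]
      rw [f7] at f6
      exact f6
    have hkey : R*κ/9 ≤ r - S/(d:ℝ) := by
      have : R*κ*(17/72) - R*κ/8 = R*κ/9 := by ring
      linarith
    -- average bound for the trajectory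
    have avg_bound : ∀ m : ℕ, m ≤ N →
        R*κ/9 ≤ -(btraj d hd r hs m (bJ d hd (btraj d hd r hs m))) := by
      intro m hm
      have hP : ∑ i ∈ Icc 1 m, hs / Real.sqrt ((i:ℝ)+1) ≤ S := by
        rw [hS_def]
        exact Finset.sum_le_sum_of_subset_of_nonneg (Finset.Icc_subset_Icc_right hm)
          (fun i _ _ => div_nonneg hh0.le (Real.sqrt_nonneg _))
      have := btraj_maxcoord d hd r hs m S hP
      linarith
    refine ⟨d, hd, fB d hd G, 0,
      (fun k => btraj d hd r hs (k - 1)),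
      (fun k => EuclideanSpace.single (bJ d hd (btraj d hd r hs (k - 1))) (-G)),
      convexOn_fB hd hG.le,
      fun z s hsg => subgrad_norm_le hG.le _ (fB_lip hd hG.le) z s hsg,
      ?_, ?_, ?_, ?_⟩
    · intro y
      rw [fB_zero]
      exact fB_nonneg hd hG.le y
    · -- initial distance
      rw [sub_zero]
      show ‖btraj d hd r hs 0‖ ≤ R
      have hnorm : ‖btraj d hd r hs 0‖ = R := by
        rw [EuclideanSpace.norm_eq]
        have hco : ∀ i : Fin d, ‖btraj d hd r hs 0 i‖^2 = r^2 := by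
          intro i
          have : btraj d hd r hs 0 i = -r := rfl
          rw [this, Real.norm_eq_abs, abs_neg, sq_abs]
        rw [Finset.sum_congr rfl (fun i _ => hco i), Finset.sum_const, Finset.card_univ,
          Fintype.card_fin, nsmul_eq_mul]
        rw [Real.sqrt_mul (by positivity : (0:ℝ) ≤ (d:ℝ)), Real.sqrt_sq hr0.le, hr_def,
          mul_comm, div_mul_cancel₀ _ (ne_of_gt hsd)]
      rw [hnorm]
    · -- iteration properties
      intro k hk1 hk2
      obtain ⟨m, rfl⟩ : ∃ m, k = m + 1 := ⟨k-1, by omega⟩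
      have hmN : m ≤ N := by omega
      constructor
      · -- subgradient
        intro z
        simp only [Nat.add_sub_cancel]
        have hMpos : 0 ≤ -(btraj d hd r hs m (bJ d hd (btraj d hd r hs m))) := by
          have := avg_bound m hmN
          have hpos : (0:ℝ) < R*κ/9 := div_pos (mul_pos hR hκ0) (by norm_num)
          linarith
        exact fB_subgrad hd hG.le _ _ (bJ_spec d hd _) hMpos z
      · -- recursion
        simp only [Nat.add_sub_cancel]
        have hsum : ∑ i ∈ Icc 1 (m+1),
            ‖EuclideanSpace.single (bJ d hd (btraj d hd r hs (i-1))) (-G)‖^2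
            = ((m:ℝ)+1)*G^2 := by
          have hterm : ∀ i ∈ Icc 1 (m+1),
              ‖EuclideanSpace.single (bJ d hd (btraj d hd r hs (i-1))) (-G)‖^2 = G^2 := by
            intro i _
            rw [EuclideanSpace.norm_single, Real.norm_eq_abs, abs_neg, abs_of_pos hG]
          rw [Finset.sum_congr rfl hterm, Finset.sum_const, Nat.card_Icc]
          have : m + 1 + 1 - 1 = m + 1 := by omega
          rw [this, nsmul_eq_mul]
          push_cast
          ring
        rw [hsum]
        have hsq : Real.sqrt (G^2 + ((m:ℝ)+1)*G^2) = G * Real.sqrt ((m:ℝ)+2) := by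
          rw [show G^2 + ((m:ℝ)+1)*G^2 = G^2*((m:ℝ)+2) by ring,
            Real.sqrt_mul (sq_nonneg G), Real.sqrt_sq hG.le]
        rw [hsq, single_smul']
        have hsc : hs/(G*Real.sqrt ((m:ℝ)+2))*(-G) = -(hs/Real.sqrt ((m:ℝ)+2)) := by
          have hne : Real.sqrt ((m:ℝ)+2) ≠ 0 := by positivity
          field_simp
        rw [hsc, single_neg', sub_neg_eq_add]
        rfl
    · -- final bound
      simp only [Nat.add_sub_cancel]
      rw [fB_zero, sub_zero, max_eq_right hc]
      have hmin : min (G*R*u) (G*R) = G*R*κ := by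
        have hGR : (0:ℝ) < G*R := mul_pos hG hR
        rcases le_total u 1 with h|h
        · have h1 : G*R*u ≤ G*R := by
            have := mul_le_mul_of_nonneg_left h hGR.le
            linarith [this]
          rw [hκ_def, min_eq_left h, min_eq_left h1]
        · have h1 : G*R ≤ G*R*u := by
            have := mul_le_mul_of_nonneg_left h hGR.le
            linarith [this]
          rw [hκ_def, min_eq_right h, min_eq_right h1, mul_one]
      rw [hmin]
      have hj₀ : r - S/(d:ℝ) ≤ -(btraj d hd r hs N (bJ d hd (btraj d hd r hs N))) :=
        btraj_maxcoord d hd r hs N S (le_of_eq hS_def.symm)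
      set j₀ := bJ d hd (btraj d hd r hs N) with hj₀_def
      have h4 : G*(-(btraj d hd r hs N j₀)) ≤ fB d hd G (btraj d hd r hs N) := by
        unfold fB
        exact mul_le_mul_of_nonneg_left
          (le_trans (le_max_left _ _)
            (Finset.le_sup' (fun j => max (-(btraj d hd r hs N j)) 0) (mem_univ j₀)))
          hG.le
      have h5 : G*(R*κ/9) ≤ G*(-(btraj d hd r hs N j₀)) := by
        apply mul_le_mul_of_nonneg_left _ hG.le
        linarith
      rw [ge_iff_le]
      have : 1/9*(G*R*κ) = G*(R*κ/9) := by ring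
      rw [this]
      linarith
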